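/- Let G be a left partially ordered group (a ≤ b implies ca ≤ cb for all c) with identity e and positive cone G⁺ = {x ∈ G : x > e}. Let B be a nonempty subset of G⁺, and let J be a downward closed subset of G⁺ such that J* = J \ B is nonempty and, for all x ∈ J*, the set B*(x) = {b ∈ B : b < x} is nonempty and finite. Then there is a family {J_ℓ : ℓ ∈ L} of pairwise disjoint nonempty subsets of J* with J* = ⋃_{ℓ ∈ L} J_ℓ and, for each ℓ ∈ L, an element b_ℓ ∈ B such that b_ℓ^{-1} J_ℓ is a downward closed subset of G⁺. -/

import Mathlib

set_option linter.unusedSectionVars false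

set_option linter.unusedVariables false

noncomputable def woMin {α : Type*} (A : Set α) (h : A.Nonempty) : α :=
  (IsWellFounded.wf (r := @WellOrderingRel α)).min A h

theorem woMin_mem {α : Type*} (A : Set α) (h : A.Nonempty) : woMin A h ∈ A :=
  (IsWellFounded.wf (r := @WellOrderingRel α)).min_mem A h

theorem woMin_eq {α : Type*} (A A' : Set α) (h : A.Nonempty) (h' : A'.Nonempty)
    (hsub : A' ⊆ A) (hmem : woMin A h ∈ A') : woMin A' h' = woMin A h := by
  have h1 := (IsWellFounded.wf (r := @WellOrderingRel α)).not_lt_min A' hmem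
  have h2 := (IsWellFounded.wf (r := @WellOrderingRel α)).not_lt_min A
      (hsub (woMin_mem A' h'))
  rcases trichotomous_of (@WellOrderingRel α) (woMin A' h') (woMin A h) with h3 | h3 | h3
  · exact absurd h3 h2
  · exact h3
  · exact absurd h3 h1

section Climb
variable {G : Type*} [Group G] [PartialOrder G]

open scoped Classical in
noncomputable def climb (S : Finset G) (c : G) : G :=
  if h : {b ∈ (S : Set G) | c < b}.Nonempty then
    climb S (woMin _ h)
  else c
termination_by {b ∈ (S : Set G) | c < b}.ncard
decreasing_by
  have hmem := woMin_mem _ h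
  apply Set.ncard_lt_ncard
  · constructor
    · rintro x ⟨hxS, hx⟩
      exact ⟨hxS, hmem.2.trans hx⟩
    · intro hsub
      exact lt_irrefl _ (hsub hmem).2
  · exact S.finite_toSet.subset (Set.sep_subset _ _)

theorem le_climb (S : Finset G) (c : G) : c ≤ climb S c := by
  induction c using climb.induct (S := S) with
  | case1 c h ih =>
      rw [climb, dif_pos h]
      exact ((woMin_mem _ h).2.le).trans ih
  | case2 c h => rw [climb, dif_neg h]

theorem climb_mem (S : Finset G) (c : G) (hc : c ∈ S) : climb S c ∈ S := by
  induction c using climb.induct (S := S) with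
  | case1 c h ih =>
      rw [climb, dif_pos h]
      exact ih (woMin_mem _ h).1
  | case2 c h => rw [climb, dif_neg h]; exact hc

theorem climb_mem' (S : Finset G) (c : G) (h : {b ∈ (S : Set G) | c < b}.Nonempty) :
    climb S c ∈ S := by
  rw [climb, dif_pos h]
  exact climb_mem S _ (woMin_mem _ h).1

theorem climb_not_lt (S : Finset G) (c : G) (b : G) (hb : b ∈ S) :
    ¬ climb S c < b := by
  induction c using climb.induct (S := S) with
  | case1 c h ih => rw [climb, dif_pos h]; exact ih
  | case2 c h =>
      rw [climb, dif_neg h]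
      intro hlt
      exact h ⟨b, hb, hlt⟩

theorem climb_congr (S S' : Finset G) (z : G)
    (hS' : ∀ b, b ∈ S' ↔ b ∈ S ∧ b < z) (c : G)
    (hlt : climb S c < z) : climb S' c = climb S c := by
  generalize hn : {b ∈ (S : Set G) | c < b}.ncard = n
  induction n using Nat.strong_induction_on generalizing c with
  | _ n ih =>
    by_cases h : {b ∈ (S : Set G) | c < b}.Nonempty
    · set c' := woMin _ h with hc'
      have hstep : climb S c = climb S c' := by rw [climb, dif_pos h]
      have hc'S : c' ∈ S := (woMin_mem _ h).1
      have hcc' : c < c' := (woMin_mem _ h).2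
      have hlt' : climb S c' < z := hstep ▸ hlt
      have hc'z : c' < z := lt_of_le_of_lt (le_climb S c') hlt'
      have hc'S' : c' ∈ S' := (hS' c').2 ⟨hc'S, hc'z⟩
      have h' : {b ∈ (S' : Set G) | c < b}.Nonempty := ⟨c', hc'S', hcc'⟩
      have hmineq : woMin _ h' = c' :=
        woMin_eq _ _ h h' (fun b hb => ⟨((hS' b).1 hb.1).1, hb.2⟩) ⟨hc'S', hcc'⟩
      have hdec : {b ∈ (S : Set G) | c' < b}.ncard < n := by
        rw [← hn]
        apply Set.ncard_lt_ncard
        · constructor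
          · rintro x ⟨hxS, hx⟩
            exact ⟨hxS, hcc'.trans hx⟩
          · intro hsub
            exact lt_irrefl _ (hsub ⟨hc'S, hcc'⟩).2
        · exact S.finite_toSet.subset (Set.sep_subset _ _)
      rw [hstep, climb, dif_pos h', hmineq]
      exact ih _ hdec c' hlt' rfl
    · have h' : ¬ {b ∈ (S' : Set G) | c < b}.Nonempty := by
        rintro ⟨b, hbS', hb⟩
        exact h ⟨b, ((hS' b).1 hbS').1, hb⟩
      rw [climb, dif_neg h', climb, dif_neg h]

end Climb

/-- A subset `S` of the positive cone `G⁺ = {x : 1 < x}` is downward closed if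
`x ∈ S` implies `(e, x) ⊆ S`. -/
def DownwardClosed {G : Type*} [Group G] [PartialOrder G] (S : Set G) : Prop :=
  S ⊆ Set.Ioi 1 ∧ ∀ x ∈ S, Set.Ioo (1 : G) x ⊆ S

/-- Partition theorem for left partially ordered groups: `J* = J \ B`
decomposes into pairwise disjoint nonempty pieces `J_ℓ`, each with a
`b_ℓ ∈ B` such that `b_ℓ⁻¹ J_ℓ` is a downward closed subset of `G⁺`. -/
theorem partition_left_ordered
    {G : Type*} [Group G] [PartialOrder G]
    [CovariantClass G G (· * ·) (· ≤ ·)]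
    (B J : Set G) (hBne : B.Nonempty) (hBpos : B ⊆ Set.Ioi 1)
    (hJ : DownwardClosed J) (hJstar : (J \ B).Nonempty)
    (hBx : ∀ x ∈ J \ B, (B ∩ Set.Iio x).Nonempty ∧ (B ∩ Set.Iio x).Finite) :
    ∃ (L : Set G) (Jfam : G → Set G) (b : G → G),
      (∀ ℓ ∈ L, (Jfam ℓ).Nonempty ∧ Jfam ℓ ⊆ J \ B) ∧
      (L.Pairwise fun ℓ₁ ℓ₂ => Disjoint (Jfam ℓ₁) (Jfam ℓ₂)) ∧
      (⋃ ℓ ∈ L, Jfam ℓ) = J \ B ∧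
      (∀ ℓ ∈ L, b ℓ ∈ B ∧ DownwardClosed ((fun y => (b ℓ)⁻¹ * y) '' Jfam ℓ)) := by
  classical
  have mulstrict : ∀ (a : G) {u v : G}, u < v → a * u < a * v := by
    intro a u v huv
    refine lt_of_le_of_ne (mul_le_mul_right huv.le a) (fun hE => huv.ne (mul_left_cancel hE))
  set Sx : G → Finset G := fun x =>
    if h : (B ∩ Set.Iio x).Finite then h.toFinset else ∅ with hSx
  have memSx : ∀ x ∈ J \ B, ∀ b : G, b ∈ Sx x ↔ b ∈ B ∧ b < x := by
    intro x hx b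
    simp only [hSx, dif_pos (hBx x hx).2, Set.Finite.mem_toFinset, Set.mem_inter_iff,
      Set.mem_Iio]
  set f : G → G := fun x => climb (Sx x) 1 with hf
  have hfB : ∀ x ∈ J \ B, f x ∈ B ∧ f x < x := by
    intro x hx
    have hne : {b ∈ (Sx x : Set G) | (1 : G) < b}.Nonempty := by
      obtain ⟨b, hb⟩ := (hBx x hx).1
      exact ⟨b, (memSx x hx b).2 ⟨hb.1, hb.2⟩, hBpos hb.1⟩
    exact (memSx x hx _).1 (climb_mem' (Sx x) 1 hne)
  have hfmax : ∀ x ∈ J \ B, ∀ b ∈ B, b < x → ¬ f x < b := by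
    intro x hx b hbB hbx
    exact climb_not_lt _ _ _ ((memSx x hx b).2 ⟨hbB, hbx⟩)
  have key : ∀ x ∈ J \ B, ∀ w, f x < w → w < x → w ∈ J \ B ∧ f w = f x := by
    intro x hx w h1 h2
    have hfx := hfB x hx
    have h1w : (1 : G) < w := (hBpos hfx.1).trans h1
    have hwJ : w ∈ J := hJ.2 x hx.1 ⟨h1w, h2⟩
    have hwB : w ∉ B := fun hwB => hfmax x hx w hwB h2 h1
    have hw : w ∈ J \ B := ⟨hwJ, hwB⟩
    refine ⟨hw, ?_⟩
    refine climb_congr (Sx x) (Sx w) w (fun b => ?_) 1 h1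
    rw [memSx w hw b, memSx x hx b]
    constructor
    · rintro ⟨h3, h4⟩
      exact ⟨⟨h3, h4.trans h2⟩, h4⟩
    · rintro ⟨⟨h3, _⟩, h4⟩
      exact ⟨h3, h4⟩
  refine ⟨f '' (J \ B), fun ℓ => (J \ B) ∩ f ⁻¹' {ℓ}, id, ?_, ?_, ?_, ?_⟩
  · rintro ℓ ⟨x, hx, rfl⟩
    exact ⟨⟨x, hx, rfl⟩, Set.inter_subset_left⟩
  · rintro ℓ₁ - ℓ₂ - hne
    rw [Set.disjoint_left]
    rintro x ⟨-, h1⟩ ⟨-, h2⟩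
    exact hne ((Set.mem_singleton_iff.1 h1).symm.trans (Set.mem_singleton_iff.1 h2))
  · apply Set.Subset.antisymm
    · simp only [Set.iUnion_subset_iff]
      intro ℓ _
      exact Set.inter_subset_left
    · intro x hx
      exact Set.mem_biUnion ⟨x, hx, rfl⟩ ⟨hx, rfl⟩
  · rintro ℓ ⟨x₀, hx₀, rfl⟩
    refine ⟨(hfB x₀ hx₀).1, ?_, ?_⟩
    · rintro y ⟨x, ⟨hx, hfx⟩, rfl⟩
      have hfx' : f x = f x₀ := hfx
      have hlt : f x₀ < x := hfx' ▸ (hfB x hx).2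
      have h1 : (1 : G) < (f x₀)⁻¹ * x := by
        have := mulstrict (f x₀)⁻¹ hlt
        rwa [inv_mul_cancel] at this
      exact h1
    · rintro y ⟨x, ⟨hx, hfx⟩, rfl⟩ z hz
      have hfx' : f x = f x₀ := hfx
      set ℓ := f x₀ with hℓ
      have hlt : ℓ < x := hfx' ▸ (hfB x hx).2
      obtain ⟨hz1, hz2⟩ := hz
      have hw1 : ℓ < ℓ * z := by simpa using mulstrict ℓ hz1
      have hw2 : ℓ * z < x := by
        simp only [id_eq] at hz2
        have := mulstrict ℓ hz2
        rwa [mul_inv_cancel_left] at this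
      have hkey := key x hx (ℓ * z) (hfx' ▸ hw1) hw2
      refine ⟨ℓ * z, ⟨hkey.1, ?_⟩, by simp⟩
      rw [Set.mem_preimage, Set.mem_singleton_iff, hkey.2, hfx']
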